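/- Let H be a weak Hopf algebra, C a coalgebra, and ⊳ : H⊗C → C a linear map satisfying (MC1) 1_H⊳c = c, (MC2) Δ(h⊳c) = (h₁⊳c₁)⊗(h₂⊳c₂), and (MC3) h⊳(k⊳c) = hk⊳c, for all h,k ∈ H and c ∈ C. Then also (MC4) ε(h⊳c) = ε(ε_s(h)⊳c) holds for all h ∈ H and c ∈ C; that is, C is a left H-module coalgebra. -/

import Mathlib

open TensorProduct Coalgebra

noncomputable section

variable (k : Type*) [Field k]

section WeakHopfDefs

variable (H : Type*) [Ring H] [Algebra k H] [Coalgebra k H]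

/-- The target map `ε_t(h) = ε(1₁ h) 1₂` of a weak bialgebra. -/
def wεt (h : H) : H :=
  (TensorProduct.lid k H)
    ((TensorProduct.map (counit (R := k) ∘ₗ LinearMap.mulRight k h) (LinearMap.id))
      (comul (R := k) (1 : H)))

/-- The source map `ε_s(h) = 1₁ ε(h 1₂)` of a weak bialgebra. -/
def wεs (h : H) : H :=
  (TensorProduct.rid k H)
    ((TensorProduct.map (LinearMap.id) (counit (R := k) ∘ₗ LinearMap.mulLeft k h))
      (comul (R := k) (1 : H)))

/-- A weak Hopf algebra structure on an algebra `H` which is also a coalgebra: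
the weak bialgebra axioms together with an antipode `S`. -/
structure WeakHopf : Type _ where
  /-- Δ is multiplicative -/
  comul_mul : ∀ h g : H, comul (R := k) (h * g) = comul (R := k) h * comul (R := k) g
  /-- ε(hgl) = Σ ε(h g₁) ε(g₂ l) -/
  counit_weak_mul : ∀ h g l : H, counit (R := k) (h * g * l)
      = LinearMap.mul' k k
          ((TensorProduct.map (counit (R := k) ∘ₗ LinearMap.mulLeft k h)
              (counit (R := k) ∘ₗ LinearMap.mulRight k l)) (comul (R := k) g))
  /-- ε(hgl) = Σ ε(h g₂) ε(g₁ l) -/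
  counit_weak_mul' : ∀ h g l : H, counit (R := k) (h * g * l)
      = LinearMap.mul' k k
          ((TensorProduct.map (counit (R := k) ∘ₗ LinearMap.mulLeft k h)
              (counit (R := k) ∘ₗ LinearMap.mulRight k l))
            ((TensorProduct.comm k H H) (comul (R := k) g)))
  /-- (1 ⊗ Δ(1))(Δ(1) ⊗ 1) = Δ²(1) -/
  comul_one_left :
      ((1 : H) ⊗ₜ[k] comul (R := k) (1 : H))
          * ((TensorProduct.assoc k H H H) (comul (R := k) (1 : H) ⊗ₜ[k] (1 : H)))
        = (LinearMap.lTensor H (comul (R := k))) (comul (R := k) (1 : H))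
  /-- (Δ(1) ⊗ 1)(1 ⊗ Δ(1)) = Δ²(1) -/
  comul_one_right :
      ((TensorProduct.assoc k H H H) (comul (R := k) (1 : H) ⊗ₜ[k] (1 : H)))
          * ((1 : H) ⊗ₜ[k] comul (R := k) (1 : H))
        = (LinearMap.lTensor H (comul (R := k))) (comul (R := k) (1 : H))
  /-- the antipode -/
  S : H →ₗ[k] H
  /-- Σ h₁ S(h₂) = ε_t(h) -/
  antipode_t : ∀ h : H,
      LinearMap.mul' k H ((LinearMap.lTensor H S) (comul (R := k) h)) = wεt k H h
  /-- Σ S(h₁) h₂ = ε_s(h) -/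
  antipode_s : ∀ h : H,
      LinearMap.mul' k H ((LinearMap.rTensor H S) (comul (R := k) h)) = wεs k H h
  /-- Σ S(h₁) h₂ S(h₃) = S(h) -/
  antipode_mid : ∀ h : H,
      LinearMap.mul' k H
        ((TensorProduct.map S (LinearMap.mul' k H ∘ₗ LinearMap.lTensor H S))
          ((LinearMap.lTensor H (comul (R := k))) (comul (R := k) h))) = S h

end WeakHopfDefs

section Actions

variable (H : Type*) [Ring H] [Algebra k H] [Coalgebra k H]
variable (C : Type*) [AddCommGroup C] [Module k C] [Coalgebra k C]

/-- The Sweedler sum `Σ (h g₁ · c₁) ε(g₂ · c₂)` appearing in (PMC3). -/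
def pmc3RHS (act : H →ₗ[k] C →ₗ[k] C) (h g : H) (c : C) : C :=
  (TensorProduct.rid k C)
    ((TensorProduct.map
        ((TensorProduct.lift act) ∘ₗ (LinearMap.rTensor C (LinearMap.mulLeft k h)))
        (counit (R := k) ∘ₗ (TensorProduct.lift act)))
      ((TensorProduct.tensorTensorTensorComm k H H C C)
        (comul (R := k) g ⊗ₜ[k] comul (R := k) c)))

/-- The Sweedler sum `Σ ε(g₁ · c₁) (h g₂ · c₂)` appearing in the symmetry condition. -/
def pmc3symRHS (act : H →ₗ[k] C →ₗ[k] C) (h g : H) (c : C) : C :=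
  (TensorProduct.lid k C)
    ((TensorProduct.map
        (counit (R := k) ∘ₗ (TensorProduct.lift act))
        ((TensorProduct.lift act) ∘ₗ (LinearMap.rTensor C (LinearMap.mulLeft k h))))
      ((TensorProduct.tensorTensorTensorComm k H H C C)
        (comul (R := k) g ⊗ₜ[k] comul (R := k) c)))

/-- (MC2)/(PMC2): `Δ(h·c) = (h₁·c₁) ⊗ (h₂·c₂)`. -/
def SweedlerComulCompat (act : H →ₗ[k] C →ₗ[k] C) : Prop :=
  ∀ (h : H) (c : C),
    comul (R := k) (act h c)
      = (TensorProduct.map (TensorProduct.lift act) (TensorProduct.lift act))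
          ((TensorProduct.tensorTensorTensorComm k H H C C)
            (comul (R := k) h ⊗ₜ[k] comul (R := k) c))

/-- `C` is a left partial `H`-module coalgebra via `act` (`act h c = h · c`). -/
structure IsPartialModuleCoalgebra (act : H →ₗ[k] C →ₗ[k] C) : Prop where
  pmc1 : ∀ c : C, act 1 c = c
  pmc2 : SweedlerComulCompat k H C act
  pmc3 : ∀ (h g : H) (c : C), act h (act g c) = pmc3RHS k H C act h g c

/-- `C` is a symmetric left partial `H`-module coalgebra via `act`. -/
structure IsSymmetricPartialModuleCoalgebra (act : H →ₗ[k] C →ₗ[k] C)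
    extends IsPartialModuleCoalgebra k H C act : Prop where
  pmc3sym : ∀ (h g : H) (c : C), act h (act g c) = pmc3symRHS k H C act h g c

/-- `C` is a left `H`-module coalgebra via `act`. -/
structure IsModuleCoalgebra (act : H →ₗ[k] C →ₗ[k] C) : Prop where
  mc1 : ∀ c : C, act 1 c = c
  mc2 : SweedlerComulCompat k H C act
  mc3 : ∀ (h g : H) (c : C), act h (act g c) = act (h * g) c
  mc4 : ∀ (h : H) (c : C), counit (R := k) (act h c) = counit (R := k) (act (wεs k H h) c)

end Actions

end

section AuxLemmas

/-- If `comul x = ∑ yᵢ ⊗ zᵢ` then `∑ ε(yᵢ) • zᵢ = x`. -/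
lemma sum_counit_smul_of_eq {R : Type*} {A : Type*} [CommSemiring R] [AddCommMonoid A]
    [Module R A] [Coalgebra R A] {x : A} {ι : Type*} {s : Finset ι} {y z : ι → A}
    (h : CoalgebraStruct.comul (R := R) x = ∑ i ∈ s, y i ⊗ₜ[R] z i) :
    ∑ i ∈ s, counit (R := R) (y i) • z i = x := by
  have h2 := Coalgebra.sum_counit_tmul_eq (⟨s, y, z, h.symm⟩ : Coalgebra.Repr R x ι)
  have := congrArg (TensorProduct.lid R A) h2
  simpa [map_sum] using this

/-- If `comul x = ∑ yᵢ ⊗ zᵢ` then `∑ ε(zᵢ) • yᵢ = x`. -/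
lemma sum_smul_counit_of_eq {R : Type*} {A : Type*} [CommSemiring R] [AddCommMonoid A]
    [Module R A] [Coalgebra R A] {x : A} {ι : Type*} {s : Finset ι} {y z : ι → A}
    (h : CoalgebraStruct.comul (R := R) x = ∑ i ∈ s, y i ⊗ₜ[R] z i) :
    ∑ i ∈ s, counit (R := R) (z i) • y i = x := by
  have h2 := Coalgebra.sum_tmul_counit_eq (⟨s, y, z, h.symm⟩ : Coalgebra.Repr R x ι)
  have := congrArg (TensorProduct.rid R A) h2
  simpa [map_sum] using this

variable (k : Type*) [Field k]
variable (H : Type*) [Ring H] [Algebra k H] [Coalgebra k H]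
variable (C : Type*) [AddCommGroup C] [Module k C] [Coalgebra k C]

/-- `Ω(x ⊗ y) = ∑ₚ ε(x · uₚ) ε(y · vₚ)`. -/
noncomputable def auxΩ (act : H →ₗ[k] C →ₗ[k] C) {ι : Type*} (s : Finset ι) (u v : ι → C) :
    H ⊗[k] H →ₗ[k] k :=
  TensorProduct.lift (LinearMap.mk₂ k
    (fun x y => ∑ p ∈ s, counit (R := k) (act x (u p)) * counit (R := k) (act y (v p)))
    (by intros; simp [map_add, add_mul, Finset.sum_add_distrib])
    (by intros; simp [Finset.mul_sum, smul_eq_mul, mul_assoc])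
    (by intros; simp [map_add, mul_add, Finset.sum_add_distrib])
    (by intros; simp [Finset.mul_sum, smul_eq_mul, mul_left_comm]))

@[simp] lemma auxΩ_tmul (act : H →ₗ[k] C →ₗ[k] C) {ι : Type*} (s : Finset ι) (u v : ι → C)
    (x y : H) : auxΩ k H C act s u v (x ⊗ₜ[k] y)
      = ∑ p ∈ s, counit (R := k) (act x (u p)) * counit (R := k) (act y (v p)) := by
  simp [auxΩ]

/-- `ψ(y ⊗ z) = ∑ⱼ ε(aⱼ y) • (bⱼ z)`. -/
noncomputable def auxψ {ι : Type*} (s : Finset ι) (a b : ι → H) :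
    H ⊗[k] H →ₗ[k] H :=
  TensorProduct.lift (LinearMap.mk₂ k
    (fun y z => ∑ j ∈ s, counit (R := k) (a j * y) • (b j * z))
    (by intros; simp [mul_add, map_add, add_smul, smul_add, Finset.sum_add_distrib])
    (by intros; simp [mul_smul_comm, map_smul, smul_smul, Finset.smul_sum])
    (by intros; simp [mul_add, smul_add, Finset.sum_add_distrib])
    (by intros; simp [mul_smul_comm, smul_smul, Finset.smul_sum, mul_comm]))

@[simp] lemma auxψ_tmul {ι : Type*} (s : Finset ι) (a b : ι → H) (y z : H) :
    auxψ k H s a b (y ⊗ₜ[k] z) = ∑ j ∈ s, counit (R := k) (a j * y) • (b j * z) := by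
  simp [auxψ]

/-- `Λ(x ⊗ y) = ∑ᵢ ε(x fᵢ) • (eᵢ ⊗ y)`. -/
noncomputable def auxΛ {ι : Type*} (s : Finset ι) (e f : ι → H) :
    H ⊗[k] H →ₗ[k] H ⊗[k] H :=
  TensorProduct.lift (LinearMap.mk₂ k
    (fun x y => ∑ i ∈ s, counit (R := k) (x * f i) • (e i ⊗ₜ[k] y))
    (by intros; simp [add_mul, map_add, add_smul, Finset.sum_add_distrib])
    (by intros; simp [smul_mul_assoc, map_smul, smul_smul, Finset.smul_sum])
    (by intros; simp [TensorProduct.tmul_add, smul_add, Finset.sum_add_distrib])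
    (by intros; simp [TensorProduct.tmul_smul, smul_smul, Finset.smul_sum, mul_comm]))

@[simp] lemma auxΛ_tmul {ι : Type*} (s : Finset ι) (e f : ι → H) (x y : H) :
    auxΛ k H s e f (x ⊗ₜ[k] y) = ∑ i ∈ s, counit (R := k) (x * f i) • (e i ⊗ₜ[k] y) := by
  simp [auxΛ]


variable {k H C}

/-- pointwise form of multiplicativity of `comul` -/
lemma comul_mul_repr (hcm : ∀ h g : H, comul (R := k) (h * g) = comul (R := k) h * comul (R := k) g)
    {ι κ : Type*} (x y : H) (Rx : Coalgebra.Repr k x ι) (Ry : Coalgebra.Repr k y κ) :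
    comul (R := k) (x * y) = ∑ j ∈ Rx.index, ∑ i ∈ Ry.index,
      (Rx.left j * Ry.left i) ⊗ₜ[k] (Rx.right j * Ry.right i) := by
  rw [hcm, ← Rx.eq, ← Ry.eq, Finset.sum_mul_sum]
  simp [Algebra.TensorProduct.tmul_mul_tmul]

/-- pointwise form of (MC2) -/
lemma mc2_repr {act : H →ₗ[k] C →ₗ[k] C} (mc2 : SweedlerComulCompat k H C act)
    {ι κ : Type*} (x : H) (d : C) (Rx : Coalgebra.Repr k x ι) (Rd : Coalgebra.Repr k d κ) :
    comul (R := k) (act x d) = ∑ j ∈ Rx.index, ∑ p ∈ Rd.index,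
      act (Rx.left j) (Rd.left p) ⊗ₜ[k] act (Rx.right j) (Rd.right p) := by
  rw [mc2 x d, ← Rx.eq, ← Rd.eq]
  simp [TensorProduct.sum_tmul, TensorProduct.tmul_sum, map_sum,
    TensorProduct.tensorTensorTensorComm_tmul]
  rw [Finset.sum_comm]

/-- pointwise form of the antipode axiom for `εₛ` -/
lemma antis_repr (wh : WeakHopf k H) {ι : Type*} (x : H) (Rx : Coalgebra.Repr k x ι) :
    ∑ j ∈ Rx.index, wh.S (Rx.left j) * Rx.right j = wεs k H x := by
  have h := wh.antipode_s x
  rw [← Rx.eq] at h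
  simpa [map_sum] using h

/-- pointwise form of `wεs` -/
lemma wεs_repr {ι : Type*} (x : H) (R1 : Coalgebra.Repr k (1 : H) ι) :
    wεs k H x = ∑ i ∈ R1.index, counit (R := k) (x * R1.right i) • R1.left i := by
  rw [wεs, ← R1.eq]
  simp [map_sum]

end AuxLemmas

set_option maxHeartbeats 1000000 in
set_option synthInstance.maxHeartbeats 200000 in
/-- If `H` is a weak Hopf algebra and a linear map `⊳ : H ⊗ C → C` satisfies
(MC1)–(MC3), then (MC4) `ε(h ⊳ c) = ε(ε_s(h) ⊳ c)` holds automatically; that is, `C` is a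
left `H`-module coalgebra. -/
theorem mc4_of_mc1_mc2_mc3
    (k : Type*) [Field k] (H : Type*) [Ring H] [Algebra k H] [Coalgebra k H]
    (C : Type*) [AddCommGroup C] [Module k C] [Coalgebra k C]
    (wh : WeakHopf k H) (act : H →ₗ[k] C →ₗ[k] C)
    (mc1 : ∀ c : C, act 1 c = c)
    (mc2 : SweedlerComulCompat k H C act)
    (mc3 : ∀ (h g : H) (c : C), act h (act g c) = act (h * g) c) :
    (∀ (h : H) (c : C),
        counit (R := k) (act h c) = counit (R := k) (act (wεs k H h) c)) ∧
      IsModuleCoalgebra k H C act := by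
  classical
  suffices main : ∀ (h : H) (c : C),
      counit (R := k) (act h c) = counit (R := k) (act (wεs k H h) c) by
    exact ⟨main, ⟨mc1, mc2, mc3, main⟩⟩
  intro h c
  set Δ1 : Coalgebra.Repr k (1 : H) (H × H) := ℛ k (1 : H) with hΔ1def
  set Rh : Coalgebra.Repr k h (H × H) := ℛ k h with hRhdef
  set Rc : Coalgebra.Repr k c (C × C) := ℛ k c with hRcdef
  set Rf : (i : Δ1.ι) → Coalgebra.Repr k (Δ1.right i) (H × H) := fun i => ℛ k (Δ1.right i) with hRfdef
  set Ra : (j : Rh.ι) → Coalgebra.Repr k (Rh.left j) (H × H) := fun j => ℛ k (Rh.left j) with hRadef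
  set Rb : (j : Rh.ι) → Coalgebra.Repr k (Rh.right j) (H × H) := fun j => ℛ k (Rh.right j) with hRbdef
  -- Lemma A : ε(h·c) = ∑ ε(1₁·c₁) ε((h 1₂)·c₂)
  have lemA : counit (R := k) (act h c) = ∑ i ∈ Δ1.index, ∑ p ∈ Rc.index,
      counit (R := k) (act (Δ1.left i) (Rc.left p))
        * counit (R := k) (act (h * Δ1.right i) (Rc.right p)) := by
    have hc2 : comul (R := k) (act 1 c)
        = ∑ q ∈ Δ1.index ×ˢ Rc.index,
            act (Δ1.left q.1) (Rc.left q.2) ⊗ₜ[k] act (Δ1.right q.1) (Rc.right q.2) := by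
      rw [mc2_repr mc2 1 c Δ1 Rc, Finset.sum_product]
    have hrec := sum_counit_smul_of_eq hc2
    rw [mc1] at hrec
    conv_lhs => rw [← hrec]
    simp only [map_sum, map_smul, mc3, smul_eq_mul]
    rw [Finset.sum_product]
  -- (IIa) : ∑ S(h₁)h₂ ⊗ h₃ = ∑ εₛ(h₁) ⊗ h₂
  have hIIa : ∑ j ∈ Rh.index, ∑ r ∈ (Rb j).index,
      (wh.S (Rh.left j) * (Rb j).left r) ⊗ₜ[k] (Rb j).right r
      = ∑ j ∈ Rh.index, wεs k H (Rh.left j) ⊗ₜ[k] Rh.right j := by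
    have h3 := Coalgebra.sum_tmul_tmul_eq Rh Ra Rb
    let Ψ : H ⊗[k] (H ⊗[k] H) →ₗ[k] H ⊗[k] H :=
      (TensorProduct.map (LinearMap.mul' k H ∘ₗ LinearMap.rTensor H wh.S) LinearMap.id)
        ∘ₗ (TensorProduct.assoc k H H H).symm.toLinearMap
    have h4 := congrArg Ψ h3
    simp only [map_sum, LinearMap.coe_comp, LinearEquiv.coe_coe, Function.comp_apply,
      TensorProduct.assoc_symm_tmul, TensorProduct.map_tmul, LinearMap.mul'_apply,
      LinearMap.rTensor_tmul, LinearMap.id_coe, id_eq, Ψ] at h4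
    rw [← h4]
    refine Finset.sum_congr rfl fun j _ => ?_
    rw [← TensorProduct.sum_tmul, antis_repr wh (Rh.left j) (Ra j)]
  -- (IIb) : ∑ εₛ(h₁) ⊗ h₂ = ∑ 1₁ ⊗ h 1₂
  have hIIb : ∑ j ∈ Rh.index, wεs k H (Rh.left j) ⊗ₜ[k] Rh.right j
      = ∑ i ∈ Δ1.index, Δ1.left i ⊗ₜ[k] (h * Δ1.right i) := by
    -- pointwise form of the weak comultiplication axiom (1 ⊗ Δ1)(Δ1 ⊗ 1) = Δ²(1)
    have halpha : ∑ i ∈ Δ1.index, ∑ i₂ ∈ Δ1.index,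
        Δ1.left i₂ ⊗ₜ[k] ((Δ1.left i * Δ1.right i₂) ⊗ₜ[k] Δ1.right i)
        = ∑ i₃ ∈ Δ1.index, ∑ q ∈ (Rf i₃).index,
            Δ1.left i₃ ⊗ₜ[k] ((Rf i₃).left q ⊗ₜ[k] (Rf i₃).right q) := by
      have ha := wh.comul_one_left
      rw [← Δ1.eq] at ha
      simp only [TensorProduct.tmul_sum, TensorProduct.sum_tmul, map_sum,
        TensorProduct.assoc_tmul, Finset.sum_mul_sum,
        Algebra.TensorProduct.tmul_mul_tmul, one_mul, mul_one,
        LinearMap.lTensor_tmul] at ha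
      refine ha.trans ?_
      refine Finset.sum_congr rfl fun i₃ _ => ?_
      rw [← (Rf i₃).eq, TensorProduct.tmul_sum]
    -- step 1 : express the LHS via auxΛ applied to comul h
    have hΛ1 : ∑ j ∈ Rh.index, wεs k H (Rh.left j) ⊗ₜ[k] Rh.right j
        = auxΛ k H Δ1.index Δ1.left Δ1.right (comul (R := k) h) := by
      rw [← Rh.eq]
      simp only [map_sum, auxΛ_tmul]
      refine Finset.sum_congr rfl fun j _ => ?_
      rw [wεs_repr (Rh.left j) Δ1, TensorProduct.sum_tmul]
      exact Finset.sum_congr rfl fun i _ => by rw [TensorProduct.smul_tmul']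
    -- step 2 : the other representation of comul h
    have hcom : comul (R := k) h = ∑ j ∈ Rh.index, ∑ i₂ ∈ Δ1.index,
        (Rh.left j * Δ1.left i₂) ⊗ₜ[k] (Rh.right j * Δ1.right i₂) := by
      conv_lhs => rw [← mul_one h]
      exact comul_mul_repr wh.comul_mul h 1 Rh Δ1
    have hΛ2 : auxΛ k H Δ1.index Δ1.left Δ1.right (comul (R := k) h)
        = ∑ j ∈ Rh.index, ∑ i₂ ∈ Δ1.index, ∑ i ∈ Δ1.index,
            counit (R := k) (Rh.left j * Δ1.left i₂ * Δ1.right i)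
              • (Δ1.left i ⊗ₜ[k] (Rh.right j * Δ1.right i₂)) := by
      rw [hcom]
      simp only [map_sum, auxΛ_tmul]
    -- step 3 : apply x ⊗ (y ⊗ z) ↦ ∑ⱼ ε(aⱼ y) • (x ⊗ bⱼ z) to halpha
    have hphi := congrArg (LinearMap.lTensor H (auxψ k H Rh.index Rh.left Rh.right)) halpha
    simp only [map_sum, LinearMap.lTensor_tmul, auxψ_tmul, TensorProduct.tmul_sum,
      TensorProduct.tmul_smul] at hphi
    -- step 4 : recovery for h * f i
    have hhf : ∀ i, Δ1.left i ⊗ₜ[k] (h * Δ1.right i)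
        = ∑ j ∈ Rh.index, ∑ q ∈ (Rf i).index,
            counit (R := k) (Rh.left j * (Rf i).left q)
              • (Δ1.left i ⊗ₜ[k] (Rh.right j * (Rf i).right q)) := by
      intro i
      have hc2 : comul (R := k) (h * Δ1.right i) = ∑ z ∈ Rh.index ×ˢ (Rf i).index,
          (Rh.left z.1 * (Rf i).left z.2) ⊗ₜ[k] (Rh.right z.1 * (Rf i).right z.2) := by
        rw [comul_mul_repr wh.comul_mul h (Δ1.right i) Rh (Rf i), Finset.sum_product]
      have hr := sum_counit_smul_of_eq hc2
      conv_lhs => rw [← hr]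
      rw [TensorProduct.tmul_sum, Finset.sum_product]
      simp only [TensorProduct.tmul_smul]
    -- assemble
    calc ∑ j ∈ Rh.index, wεs k H (Rh.left j) ⊗ₜ[k] Rh.right j
        = auxΛ k H Δ1.index Δ1.left Δ1.right (comul (R := k) h) := hΛ1
      _ = ∑ j ∈ Rh.index, ∑ i₂ ∈ Δ1.index, ∑ i ∈ Δ1.index,
            counit (R := k) (Rh.left j * Δ1.left i₂ * Δ1.right i)
              • (Δ1.left i ⊗ₜ[k] (Rh.right j * Δ1.right i₂)) := hΛ2
      _ = ∑ i ∈ Δ1.index, ∑ i₂ ∈ Δ1.index, ∑ j ∈ Rh.index,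
            counit (R := k) (Rh.left j * (Δ1.left i * Δ1.right i₂))
              • (Δ1.left i₂ ⊗ₜ[k] (Rh.right j * Δ1.right i)) := by
          rw [Finset.sum_comm]
          refine Finset.sum_congr rfl fun i₂ _ => ?_
          rw [Finset.sum_comm]
          refine Finset.sum_congr rfl fun i _ => Finset.sum_congr rfl fun j _ => ?_
          rw [mul_assoc]
      _ = ∑ i₃ ∈ Δ1.index, ∑ q ∈ (Rf i₃).index, ∑ j ∈ Rh.index,
            counit (R := k) (Rh.left j * (Rf i₃).left q)
              • (Δ1.left i₃ ⊗ₜ[k] (Rh.right j * (Rf i₃).right q)) := hphi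
      _ = ∑ i ∈ Δ1.index, Δ1.left i ⊗ₜ[k] (h * Δ1.right i) := by
          refine Finset.sum_congr rfl fun i _ => ?_
          rw [hhf i, Finset.sum_comm]
  -- the RHS of the goal equals Ω applied to the LHS of (IIa)
  have goalRHS : counit (R := k) (act (wεs k H h) c)
      = auxΩ k H C act Rc.index Rc.left Rc.right
          (∑ j ∈ Rh.index, ∑ r ∈ (Rb j).index,
            (wh.S (Rh.left j) * (Rb j).left r) ⊗ₜ[k] (Rb j).right r) := by
    rw [← antis_repr wh h Rh]
    have hbc : ∀ j, act (Rh.right j) c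
        = ∑ q ∈ (Rb j).index ×ˢ Rc.index,
            counit (R := k) (act ((Rb j).right q.1) (Rc.right q.2))
              • act ((Rb j).left q.1) (Rc.left q.2) := by
      intro j
      have hc2 : comul (R := k) (act (Rh.right j) c)
          = ∑ q ∈ (Rb j).index ×ˢ Rc.index,
              act ((Rb j).left q.1) (Rc.left q.2) ⊗ₜ[k] act ((Rb j).right q.1) (Rc.right q.2) := by
        rw [mc2_repr mc2 (Rh.right j) c (Rb j) Rc, Finset.sum_product]
      exact (sum_smul_counit_of_eq hc2).symm
    calc counit (R := k) (act (∑ j ∈ Rh.index, wh.S (Rh.left j) * Rh.right j) c)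
        = ∑ j ∈ Rh.index, counit (R := k) (act (wh.S (Rh.left j)) (act (Rh.right j) c)) := by
          simp [map_sum, mc3]
      _ = ∑ j ∈ Rh.index, ∑ q ∈ (Rb j).index ×ˢ Rc.index,
            counit (R := k) (act ((Rb j).right q.1) (Rc.right q.2))
              * counit (R := k) (act (wh.S (Rh.left j) * (Rb j).left q.1) (Rc.left q.2)) := by
          refine Finset.sum_congr rfl fun j _ => ?_
          rw [hbc j]
          simp only [map_sum, map_smul, mc3, smul_eq_mul]
      _ = _ := by
          simp only [map_sum, auxΩ_tmul]
          refine Finset.sum_congr rfl fun j _ => ?_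
          rw [Finset.sum_product]
          exact Finset.sum_congr rfl fun r _ => Finset.sum_congr rfl fun p _ => mul_comm _ _
  rw [goalRHS, hIIa, hIIb, lemA]
  simp [map_sum]
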